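/- arXiv:2603.06678 — 8 statements merged into one kernel-verified Lean document; each statement's English description precedes it below -/
import Mathlib

section
/- If a redundancy function I_cap satisfies Weak Monotonicity and Self-Redundancy, then it satisfies the Lower Bound property: for any random variable Q such that Q is a deterministic function of each source X_i (i = 1,...,n), we have I_cap(X_1,...,X_n; Y) ≥ I(Q; Y). -/
/-- A (finite, discrete) random variable on the finite sample space `Ω`,
with values encoded as natural numbers. -/
abbrev RV (Ω : Type) := Ω → ℕ

/-- `p` is a probability mass function on `Ω`. -/
def IsPMF {Ω : Type} [Fintype Ω] (p : Ω → ℝ) : Prop :=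
  (∀ ω, 0 ≤ p ω) ∧ ∑ ω, p ω = 1

/-- Probability that the random variable `X` takes the value `v`. -/
noncomputable def prob {Ω α : Type} [Fintype Ω] [DecidableEq α]
    (p : Ω → ℝ) (X : Ω → α) (v : α) : ℝ :=
  ∑ ω ∈ Finset.univ.filter (fun ω => X ω = v), p ω

/-- Shannon entropy of the random variable `X` under the distribution `p`. -/
noncomputable def ent {Ω α : Type} [Fintype Ω] [DecidableEq α]
    (p : Ω → ℝ) (X : Ω → α) : ℝ :=
  ∑ v ∈ Finset.image X Finset.univ, -(prob p X v * Real.log (prob p X v))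

/-- Shannon mutual information `I(X;Y)` under the distribution `p`. -/
noncomputable def MI {Ω α β : Type} [Fintype Ω] [DecidableEq α] [DecidableEq β]
    (p : Ω → ℝ) (X : Ω → α) (Y : Ω → β) : ℝ :=
  ent p X + ent p Y - ent p (fun ω => (X ω, Y ω))

/-- The joint random variable `(X,Y)`, encoded back into `ℕ` via the
injective pairing function `Nat.pair`. -/
def joint {Ω : Type} (X Y : RV Ω) : RV Ω := fun ω => Nat.pair (X ω) (Y ω)

/-- If a redundancy function `Icap` satisfies Weak Monotonicity and
Self-Redundancy, then it satisfies the Lower Bound property: for any random variable `Q`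
that is a deterministic function of each source `X i`, `Icap(X₁,…,Xₙ;Y) ≥ I(Q;Y)`. -/
theorem lower_bound_of_weak_monotonicity_and_self_redundancy
    {Ω : Type} [Fintype Ω] (p : Ω → ℝ) (hp : IsPMF p)
    (Icap : List (RV Ω) → RV Ω → ℝ)
    -- Self-Redundancy: for a single source, redundancy is mutual information
    (hSR : ∀ X Y : RV Ω, Icap [X] Y = MI p X Y)
    -- Weak Monotonicity: adding a source (anywhere in the list) does not increase
    -- redundancy, with equality if some existing source is a deterministic function
    -- of the added source
    (hWM : ∀ (l₁ l₂ : List (RV Ω)) (X Y : RV Ω),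
      Icap (l₁ ++ [X] ++ l₂) Y ≤ Icap (l₁ ++ l₂) Y ∧
      ((∃ Z ∈ l₁ ++ l₂, ∃ f : ℕ → ℕ, Z = f ∘ X) →
        Icap (l₁ ++ [X] ++ l₂) Y = Icap (l₁ ++ l₂) Y)) :
    -- Lower Bound
    ∀ (l : List (RV Ω)) (Q Y : RV Ω), l ≠ [] →
      (∀ X ∈ l, ∃ f : ℕ → ℕ, Q = f ∘ X) →
      MI p Q Y ≤ Icap l Y := by
  intro l Q Y _ hfn
  have key : ∀ m : List (RV Ω), (∀ X ∈ m, ∃ f : ℕ → ℕ, Q = f ∘ X) →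
      Icap (m ++ [Q]) Y = Icap [Q] Y := by
    intro m
    induction m with
    | nil => intro _; rfl
    | cons X t ih =>
      intro h
      have h1 : Icap ([] ++ [X] ++ (t ++ [Q])) Y = Icap ([] ++ (t ++ [Q])) Y :=
        (hWM [] (t ++ [Q]) X Y).2 ⟨Q, by simp, h X (by simp)⟩
      simp only [List.nil_append] at h1
      have ih' := ih (fun Z hZ => h Z (List.mem_cons_of_mem _ hZ))
      calc Icap ((X :: t) ++ [Q]) Y = Icap (X :: (t ++ [Q])) Y := by simp
        _ = Icap (t ++ [Q]) Y := h1
        _ = Icap [Q] Y := ih'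
  have h2 : Icap (l ++ [Q]) Y ≤ Icap l Y := by
    have := (hWM l [] Q Y).1
    simpa using this
  calc MI p Q Y = Icap [Q] Y := (hSR Q Y).symm
    _ = Icap (l ++ [Q]) Y := (key l hfn).symm
    _ ≤ Icap l Y := h2
end

section
/- If a redundancy function I_cap satisfies Self-Redundancy, Target Chain rule, and Target Equality, then it satisfies the Identity property: I_cap(X_1, X_2; (X_1, X_2)) = I(X_1; X_2). -/
/-- The conditional distribution of `p` given the event `Z = z`. -/
noncomputable def condDist {Ω : Type} [Fintype Ω] (p : Ω → ℝ) (Z : RV Ω) (z : ℕ) :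
    Ω → ℝ :=
  fun ω => if Z ω = z then p ω / prob p Z z else 0

/-- Conditional redundancy `Icap(l; Y₂ | Y₁)`: the expectation over outcomes `y₁` of `Y₁`
of the redundancy evaluated on the conditional distribution given `Y₁ = y₁`. -/
noncomputable def IcapCond {Ω : Type} [Fintype Ω]
    (Icap : (Ω → ℝ) → List (RV Ω) → RV Ω → ℝ)
    (p : Ω → ℝ) (l : List (RV Ω)) (Y₂ Y₁ : RV Ω) : ℝ :=
  ∑ z ∈ Finset.image Y₁ Finset.univ, prob p Y₁ z * Icap (condDist p Y₁ z) l Y₂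

open Finset in
lemma prob_of_not_mem {Ω α : Type} [Fintype Ω] [DecidableEq α] (p : Ω → ℝ) (X : Ω → α)
    (v : α) (h : v ∉ Finset.image X Finset.univ) : prob p X v = 0 := by
  unfold prob
  rw [Finset.filter_false_of_mem, Finset.sum_empty]
  intro ω _ hω
  exact h (Finset.mem_image.mpr ⟨ω, Finset.mem_univ ω, hω⟩)

lemma ent_eq_sum {Ω α : Type} [Fintype Ω] [DecidableEq α] (p : Ω → ℝ) (X : Ω → α)
    (S : Finset α) (h : Finset.image X Finset.univ ⊆ S) :
    ent p X = ∑ v ∈ S, -(prob p X v * Real.log (prob p X v)) := by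
  unfold ent
  exact Finset.sum_subset h (fun v _ hv => by rw [prob_of_not_mem p X v hv]; simp)

lemma ent_swap {Ω α β : Type} [Fintype Ω] [DecidableEq α] [DecidableEq β]
    (p : Ω → ℝ) (X : Ω → α) (Y : Ω → β) :
    ent p (fun ω => (X ω, Y ω)) = ent p (fun ω => (Y ω, X ω)) := by
  have hXY : Finset.image (fun ω => (X ω, Y ω)) Finset.univ ⊆
      (Finset.image X Finset.univ) ×ˢ (Finset.image Y Finset.univ) := by
    intro v hv
    obtain ⟨ω, -, rfl⟩ := Finset.mem_image.mp hv
    exact Finset.mem_product.mpr ⟨Finset.mem_image_of_mem _ (Finset.mem_univ ω),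
      Finset.mem_image_of_mem _ (Finset.mem_univ ω)⟩
  have hYX : Finset.image (fun ω => (Y ω, X ω)) Finset.univ ⊆
      (Finset.image Y Finset.univ) ×ˢ (Finset.image X Finset.univ) := by
    intro v hv
    obtain ⟨ω, -, rfl⟩ := Finset.mem_image.mp hv
    exact Finset.mem_product.mpr ⟨Finset.mem_image_of_mem _ (Finset.mem_univ ω),
      Finset.mem_image_of_mem _ (Finset.mem_univ ω)⟩
  rw [ent_eq_sum p _ _ hXY, ent_eq_sum p _ _ hYX,
    Finset.sum_product, Finset.sum_product]
  rw [Finset.sum_comm]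
  apply Finset.sum_congr rfl; intro w _; apply Finset.sum_congr rfl; intro v _
  have : prob p (fun ω => (X ω, Y ω)) (v, w) = prob p (fun ω => (Y ω, X ω)) (w, v) := by
    unfold prob
    congr 1
    ext ω
    simp [Prod.ext_iff, and_comm]
  rw [this]

lemma MI_symm {Ω α β : Type} [Fintype Ω] [DecidableEq α] [DecidableEq β]
    (p : Ω → ℝ) (X : Ω → α) (Y : Ω → β) : MI p X Y = MI p Y X := by
  unfold MI; rw [ent_swap]; ring

lemma prob_nonneg' {Ω α : Type} [Fintype Ω] [DecidableEq α] {p : Ω → ℝ}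
    (hp : ∀ ω, 0 ≤ p ω) (X : Ω → α) (v : α) : 0 ≤ prob p X v :=
  Finset.sum_nonneg fun ω _ => hp ω

lemma condDist_pmf {Ω : Type} [Fintype Ω] {p : Ω → ℝ} (hp : IsPMF p) (Z : RV Ω) (z : ℕ)
    (hz : 0 < prob p Z z) : IsPMF (condDist p Z z) := by
  refine ⟨fun ω => ?_, ?_⟩
  · unfold condDist
    split
    · exact div_nonneg (hp.1 ω) hz.le
    · exact le_refl 0
  · unfold condDist
    rw [Finset.sum_ite, Finset.sum_const_zero, add_zero, ← Finset.sum_div]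
    rw [show (∑ ω ∈ Finset.univ.filter (fun ω => Z ω = z), p ω) = prob p Z z from rfl]
    exact div_self hz.ne'

-- q(ω) = 0 when Z ω ≠ z
lemma condDist_zero {Ω : Type} [Fintype Ω] (p : Ω → ℝ) (Z : RV Ω) (z : ℕ) {ω : Ω}
    (h : Z ω ≠ z) : condDist p Z z ω = 0 := by simp [condDist, h]

lemma prob_cond_self {Ω : Type} [Fintype Ω] {p : Ω → ℝ} (hp : IsPMF p) (Z : RV Ω) (z : ℕ)
    (hz : 0 < prob p Z z) : prob (condDist p Z z) Z z = 1 := by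
  have h1 := (condDist_pmf hp Z z hz).2
  rw [← h1]
  unfold prob
  apply Finset.sum_subset (Finset.filter_subset _ _)
  intro ω _ hω
  simp only [Finset.mem_filter, Finset.mem_univ, true_and] at hω
  exact condDist_zero p Z z hω

lemma prob_cond_ne {Ω : Type} [Fintype Ω] (p : Ω → ℝ) (Z : RV Ω) (z v : ℕ)
    (h : v ≠ z) : prob (condDist p Z z) Z v = 0 := by
  unfold prob
  apply Finset.sum_eq_zero
  intro ω hω
  simp only [Finset.mem_filter, Finset.mem_univ, true_and] at hω
  exact condDist_zero p Z z (hω ▸ h)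

lemma prob_cond_pair_ne {Ω : Type} [Fintype Ω] (p : Ω → ℝ) (X₁ X₂ : RV Ω) (z v w : ℕ)
    (h : v ≠ z) : prob (condDist p X₁ z) (fun ω => (X₁ ω, X₂ ω)) (v, w) = 0 := by
  unfold prob
  apply Finset.sum_eq_zero
  intro ω hω
  simp only [Finset.mem_filter, Finset.mem_univ, true_and, Prod.mk.injEq] at hω
  exact condDist_zero p X₁ z (hω.1 ▸ h)

lemma prob_cond_pair_eq {Ω : Type} [Fintype Ω] (p : Ω → ℝ) (X₁ X₂ : RV Ω) (z w : ℕ) :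
    prob (condDist p X₁ z) (fun ω => (X₁ ω, X₂ ω)) (z, w)
      = prob (condDist p X₁ z) X₂ w := by
  unfold prob
  apply Finset.sum_subset
  · intro ω hω
    simp only [Finset.mem_filter, Finset.mem_univ, true_and, Prod.mk.injEq] at hω ⊢
    exact hω.2
  · intro ω hmem hω
    simp only [Finset.mem_filter, Finset.mem_univ, true_and] at hmem
    simp only [Finset.mem_filter, Finset.mem_univ, true_and, Prod.mk.injEq,
      not_and] at hω
    by_cases hX : X₁ ω = z
    · exact absurd hmem (hω hX)
    · exact condDist_zero p X₁ z hX

lemma MI_cond_zero {Ω : Type} [Fintype Ω] {p : Ω → ℝ} (hp : IsPMF p) (X₁ X₂ : RV Ω)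
    (z : ℕ) (hz : 0 < prob p X₁ z) (hmem : z ∈ Finset.image X₁ Finset.univ) :
    MI (condDist p X₁ z) X₁ X₂ = 0 := by
  set q := condDist p X₁ z with hq
  have h1 : ent q X₁ = 0 := by
    unfold ent
    apply Finset.sum_eq_zero
    intro v _
    by_cases hv : v = z
    · rw [hv, prob_cond_self hp X₁ z hz]; simp
    · rw [prob_cond_ne p X₁ z v hv]; simp
  have h2 : ent q (fun ω => (X₁ ω, X₂ ω)) = ent q X₂ := by
    have hsub : Finset.image (fun ω => (X₁ ω, X₂ ω)) Finset.univ ⊆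
        (Finset.image X₁ Finset.univ) ×ˢ (Finset.image X₂ Finset.univ) := by
      intro v hv
      obtain ⟨ω, -, rfl⟩ := Finset.mem_image.mp hv
      exact Finset.mem_product.mpr ⟨Finset.mem_image_of_mem _ (Finset.mem_univ ω),
        Finset.mem_image_of_mem _ (Finset.mem_univ ω)⟩
    rw [ent_eq_sum q _ _ hsub, Finset.sum_product]
    rw [Finset.sum_eq_single z]
    · unfold ent
      apply Finset.sum_congr rfl
      intro w _
      rw [prob_cond_pair_eq]
    · intro v _ hv
      apply Finset.sum_eq_zero
      intro w _
      rw [prob_cond_pair_ne p X₁ X₂ z v w hv]; simp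
    · intro h; exact absurd hmem h
  unfold MI
  rw [h1, h2]; ring

/-- If a redundancy function satisfies Self-Redundancy, the Target Chain
rule, and Target Equality, then it satisfies the Identity property:
`Icap(X₁, X₂; (X₁,X₂)) = I(X₁;X₂)`. -/
theorem identity_of_self_redundancy_target_chain_rule_and_target_equality
    {Ω : Type} [Fintype Ω]
    (Icap : (Ω → ℝ) → List (RV Ω) → RV Ω → ℝ)
    -- Self-Redundancy (for every probability distribution)
    (hSR : ∀ p : Ω → ℝ, IsPMF p → ∀ X Y : RV Ω, Icap p [X] Y = MI p X Y)
    -- Target Chain rule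
    (hTC : ∀ p : Ω → ℝ, IsPMF p → ∀ (l : List (RV Ω)) (Y₁ Y₂ : RV Ω),
      Icap p l (joint Y₁ Y₂) = Icap p l Y₁ + IcapCond Icap p l Y₂ Y₁)
    -- Target Equality: adding the target (anywhere) to the sources does not change Icap
    (hTE : ∀ p : Ω → ℝ, IsPMF p → ∀ (l₁ l₂ : List (RV Ω)) (Y : RV Ω),
      Icap p (l₁ ++ [Y] ++ l₂) Y = Icap p (l₁ ++ l₂) Y)
    (p : Ω → ℝ) (hp : IsPMF p) (X₁ X₂ : RV Ω) :
    -- Identity property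
    Icap p [X₁, X₂] (joint X₁ X₂) = MI p X₁ X₂ := by
  rw [hTC p hp [X₁, X₂] X₁ X₂]
  have hA : Icap p [X₁, X₂] X₁ = MI p X₂ X₁ := by
    have h := hTE p hp [] [X₂] X₁
    simp only [List.nil_append, List.cons_append, List.singleton_append] at h
    rw [h, hSR p hp X₂ X₁]
  have hB : IcapCond Icap p [X₁, X₂] X₂ X₁ = 0 := by
    unfold IcapCond
    apply Finset.sum_eq_zero
    intro z hz
    rcases (prob_nonneg' hp.1 X₁ z).lt_or_eq with hpos | hzero
    · have hq := condDist_pmf hp X₁ z hpos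
      have h := hTE (condDist p X₁ z) hq [X₁] [] X₂
      simp only [List.append_nil, List.cons_append, List.singleton_append, List.nil_append] at h
      rw [h, hSR _ hq X₁ X₂, MI_cond_zero hp X₁ X₂ z hpos hz, mul_zero]
    · rw [← hzero, zero_mul]
  rw [hA, hB, add_zero, MI_symm]
end

section
/- A redundancy function I_cap satisfies Strong Monotonicity if and only if it satisfies both Weak Monotonicity and Target Equality. -/
/-- A redundancy function satisfies Strong Monotonicity if and only if it
satisfies both Weak Monotonicity and Target Equality. -/
theorem strong_monotonicity_iff_weak_monotonicity_and_target_equality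
    {Ω : Type} [Fintype Ω] (Icap : List (RV Ω) → RV Ω → ℝ) :
    -- Strong Monotonicity: adding a source does not increase redundancy, with equality
    -- if some existing source, or the target, is a deterministic function of it
    (∀ (l₁ l₂ : List (RV Ω)) (X Y : RV Ω),
      Icap (l₁ ++ [X] ++ l₂) Y ≤ Icap (l₁ ++ l₂) Y ∧
      ((∃ Z : RV Ω, (Z ∈ l₁ ++ l₂ ∨ Z = Y) ∧ ∃ f : ℕ → ℕ, Z = f ∘ X) →
        Icap (l₁ ++ [X] ++ l₂) Y = Icap (l₁ ++ l₂) Y))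
    ↔
    -- Weak Monotonicity
    ((∀ (l₁ l₂ : List (RV Ω)) (X Y : RV Ω),
      Icap (l₁ ++ [X] ++ l₂) Y ≤ Icap (l₁ ++ l₂) Y ∧
      ((∃ Z ∈ l₁ ++ l₂, ∃ f : ℕ → ℕ, Z = f ∘ X) →
        Icap (l₁ ++ [X] ++ l₂) Y = Icap (l₁ ++ l₂) Y))
    ∧
    -- Target Equality
    (∀ (l₁ l₂ : List (RV Ω)) (Y : RV Ω),
      Icap (l₁ ++ [Y] ++ l₂) Y = Icap (l₁ ++ l₂) Y)) := by
  constructor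
  · intro hS
    refine ⟨fun l₁ l₂ X Y => ⟨(hS l₁ l₂ X Y).1, fun ⟨Z, hZ, hf⟩ =>
      (hS l₁ l₂ X Y).2 ⟨Z, Or.inl hZ, hf⟩⟩, fun l₁ l₂ Y =>
      (hS l₁ l₂ Y Y).2 ⟨Y, Or.inr rfl, id, rfl⟩⟩
  · rintro ⟨hW, hT⟩ l₁ l₂ X Y
    refine ⟨(hW l₁ l₂ X Y).1, ?_⟩
    rintro ⟨Z, hZ | hZ, f, hf⟩
    · exact (hW l₁ l₂ X Y).2 ⟨Z, hZ, f, hf⟩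
    · subst hZ
      have h1 : Icap (l₁ ++ [X] ++ ([Z] ++ l₂)) Z = Icap (l₁ ++ [X] ++ l₂) Z := by
        have := hT (l₁ ++ [X]) l₂ Z
        simpa [List.append_assoc] using this
      have h2 : Icap (l₁ ++ [X] ++ ([Z] ++ l₂)) Z = Icap (l₁ ++ ([Z] ++ l₂)) Z :=
        (hW l₁ ([Z] ++ l₂) X Z).2 ⟨Z, by simp, f, hf⟩
      have h3 : Icap (l₁ ++ ([Z] ++ l₂)) Z = Icap (l₁ ++ l₂) Z := by
        have := hT l₁ l₂ Z
        simpa [List.append_assoc] using this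
      rw [← h1, h2, h3]
end

section
/- If a redundancy function I_cap satisfies Self-Redundancy, Subset Equality, and Strong Symmetry, then it satisfies the Identity property: I_cap(X_1, X_2; (X_1, X_2)) = I(X_1; X_2). -/
/-- If a redundancy function satisfies Self-Redundancy, Subset Equality,
and Strong Symmetry, then it satisfies the Identity property:
`Icap(X₁, X₂; (X₁,X₂)) = I(X₁;X₂)`. -/
theorem identity_of_self_redundancy_subset_equality_and_strong_symmetry
    {Ω : Type} [Fintype Ω] (p : Ω → ℝ) (hp : IsPMF p)
    (Icap : List (RV Ω) → RV Ω → ℝ)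
    -- Self-Redundancy
    (hSR : ∀ X Y : RV Ω, Icap [X] Y = MI p X Y)
    -- Subset Equality: removing a source `W` of which some other source is a
    -- deterministic function preserves Icap
    (hSE : ∀ (l₁ l₂ : List (RV Ω)) (W Y : RV Ω),
      (∃ Z ∈ l₁ ++ l₂, ∃ f : ℕ → ℕ, Z = f ∘ W) →
      Icap (l₁ ++ [W] ++ l₂) Y = Icap (l₁ ++ l₂) Y)
    -- Strong Symmetry: Icap is invariant under any permutation of the combined list of
    -- sources and target
    (hSo : ∀ (l l' : List (RV Ω)) (Y Y' : RV Ω),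
      (Y :: l).Perm (Y' :: l') → Icap l Y = Icap l' Y') :
    -- Identity property
    ∀ X₁ X₂ : RV Ω, Icap [X₁, X₂] (joint X₁ X₂) = MI p X₁ X₂ := by
  intro X₁ X₂
  set J := joint X₁ X₂ with hJ
  have hperm : (J :: [X₁, X₂]).Perm (X₂ :: [X₁, J]) := by
    refine (List.Perm.swap X₁ J [X₂]).trans ?_
    refine (List.Perm.cons X₁ (List.Perm.swap X₂ J [])).trans ?_
    exact List.Perm.swap X₂ X₁ [J]
  have h1 : Icap [X₁, X₂] J = Icap [X₁, J] X₂ := hSo _ _ _ _ hperm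
  have h2 : Icap ([X₁] ++ [J] ++ []) X₂ = Icap ([X₁] ++ []) X₂ := by
    refine hSE [X₁] [] J X₂ ⟨X₁, by simp, fun n => (Nat.unpair n).1, ?_⟩
    funext ω
    simp [hJ, joint]
  simpa [h1, hSR] using h2
end

section
/- If a redundancy function satisfies Identity and Target Monotonicity, then for any deterministic function f of two sources, I_cap(X_1, X_2; f(X_1, X_2)) ≤ I(X_1; X_2). -/
/-- If a redundancy function satisfies Identity and Target Monotonicity
(together with Equivalence-class Invariance of the target, which may be assumed), then
for any deterministic function `f` of the two sources,
`Icap(X₁, X₂; f(X₁,X₂)) ≤ I(X₁;X₂)`. -/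
theorem redundancy_of_function_target_le_source_mutual_information
    {Ω : Type} [Fintype Ω] (p : Ω → ℝ) (hp : IsPMF p)
    (Icap : List (RV Ω) → RV Ω → ℝ)
    -- Identity property
    (hID : ∀ X₁ X₂ : RV Ω, Icap [X₁, X₂] (joint X₁ X₂) = MI p X₁ X₂)
    -- Target Monotonicity
    (hTM : ∀ X₁ X₂ Y₁ Y₂ : RV Ω, Icap [X₁, X₂] Y₁ ≤ Icap [X₁, X₂] (joint Y₁ Y₂))
    -- Equivalence-class Invariance: Icap is invariant under relabelling
    -- (bijective recoding) of the target
    (hEI : ∀ (l : List (RV Ω)) (Y Y' : RV Ω),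
      (∃ g : ℕ → ℕ, Y' = g ∘ Y) → (∃ g' : ℕ → ℕ, Y = g' ∘ Y') →
      Icap l Y = Icap l Y')
    (X₁ X₂ : RV Ω) (f : ℕ → ℕ → ℕ) :
    Icap [X₁, X₂] (fun ω => f (X₁ ω) (X₂ ω)) ≤ MI p X₁ X₂ := by
  set Z : RV Ω := fun ω => f (X₁ ω) (X₂ ω) with hZ
  have h1 : Icap [X₁, X₂] Z ≤ Icap [X₁, X₂] (joint Z (joint X₁ X₂)) :=
    hTM X₁ X₂ Z (joint X₁ X₂)
  have h2 : Icap [X₁, X₂] (joint Z (joint X₁ X₂)) = Icap [X₁, X₂] (joint X₁ X₂) := by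
    apply hEI
    · exact ⟨fun n => n.unpair.2, by
        funext ω
        simp [joint, Function.comp]⟩
    · exact ⟨fun n => Nat.pair (f n.unpair.1 n.unpair.2) n, by
        funext ω
        simp [joint, Function.comp, hZ]⟩
  calc Icap [X₁, X₂] Z ≤ Icap [X₁, X₂] (joint X₁ X₂) := h2 ▸ h1
    _ = MI p X₁ X₂ := hID X₁ X₂
end

section
/- If a redundancy function satisfies Global Positivity, Independent Identity, and Target Monotonicity, then it admits no mechanistic redundancy: for independent sources X_1 ⊥ X_2 and any deterministic function f, I_cap(X_1, X_2; f(X_1, X_2)) = 0. -/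
/-- Two random variables are independent under `p`. -/
def IndepRV {Ω : Type} [Fintype Ω] (p : Ω → ℝ) (X₁ X₂ : RV Ω) : Prop :=
  ∀ a b : ℕ, prob p (fun ω => (X₁ ω, X₂ ω)) (a, b) = prob p X₁ a * prob p X₂ b

/-- If a redundancy function satisfies Global Positivity, Independent
Identity, and Target Monotonicity (together with Equivalence-class Invariance of the
target, which may be assumed), then it admits no mechanistic redundancy: for independent
sources and any deterministic function `f`, `Icap(X₁, X₂; f(X₁,X₂)) = 0`. -/
theorem no_mechanistic_redundancy_of_GP_IID_TM
    {Ω : Type} [Fintype Ω] (p : Ω → ℝ) (hp : IsPMF p)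
    (Icap : List (RV Ω) → RV Ω → ℝ)
    -- Global Positivity
    (hGP : ∀ (l : List (RV Ω)) (Y : RV Ω), 0 ≤ Icap l Y)
    -- Independent Identity
    (hIID : ∀ X₁ X₂ : RV Ω, IndepRV p X₁ X₂ → Icap [X₁, X₂] (joint X₁ X₂) = 0)
    -- Target Monotonicity
    (hTM : ∀ X₁ X₂ Y₁ Y₂ : RV Ω, Icap [X₁, X₂] Y₁ ≤ Icap [X₁, X₂] (joint Y₁ Y₂))
    -- Equivalence-class Invariance: Icap is invariant under relabelling
    -- (bijective recoding) of the target
    (hEI : ∀ (l : List (RV Ω)) (Y Y' : RV Ω),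
      (∃ g : ℕ → ℕ, Y' = g ∘ Y) → (∃ g' : ℕ → ℕ, Y = g' ∘ Y') →
      Icap l Y = Icap l Y')
    (X₁ X₂ : RV Ω) (hind : IndepRV p X₁ X₂) (f : ℕ → ℕ → ℕ) :
    Icap [X₁, X₂] (fun ω => f (X₁ ω) (X₂ ω)) = 0 := by
  set Y : RV Ω := fun ω => f (X₁ ω) (X₂ ω) with hY
  have h1 : Icap [X₁, X₂] Y ≤ Icap [X₁, X₂] (joint Y (joint X₁ X₂)) := hTM _ _ _ _
  have h2 : Icap [X₁, X₂] (joint Y (joint X₁ X₂)) = Icap [X₁, X₂] (joint X₁ X₂) := by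
    apply hEI
    · exact ⟨fun n => (Nat.unpair n).2, by funext ω; simp [joint, Y]⟩
    · refine ⟨fun n => Nat.pair (f (Nat.unpair n).1 (Nat.unpair n).2) n, ?_⟩
      funext ω; simp [joint, Y]
  have h3 := hIID X₁ X₂ hind
  have := hGP [X₁, X₂] Y
  linarith
end

section
/- The maximum entropy joint distribution q(x_1, x_2, y) over finite alphabets, subject to matching both pairwise marginals q(x_1, y) = p(x_1, y) and q(x_2, y) = p(x_2, y) of a given full-support distribution p, is q(x_1, x_2, y) = p(x_1, y) p(x_2, y) / p(y), i.e., the distribution making X_1 and X_2 conditionally independent given Y. -/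
/-- Shannon entropy of a distribution `q` on a finite type (natural logarithm). -/
noncomputable def entD {α : Type} [Fintype α] (q : α → ℝ) : ℝ :=
  ∑ x, -(q x * Real.log (q x))

/-- Marginal distribution of the first two coordinates. -/
def mAB {A B C : Type} [Fintype C] (q : A × B × C → ℝ) : A × B → ℝ :=
  fun x => ∑ c, q (x.1, x.2, c)

/-- Marginal distribution of the first and third coordinates. -/
def mAC {A B C : Type} [Fintype B] (q : A × B × C → ℝ) : A × C → ℝ :=
  fun x => ∑ b, q (x.1, b, x.2)

/-- Marginal distribution of the second and third coordinates. -/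
def mBC {A B C : Type} [Fintype A] (q : A × B × C → ℝ) : B × C → ℝ :=
  fun x => ∑ a, q (a, x.1, x.2)

/-- Marginal distribution of the first coordinate. -/
def mA {A B C : Type} [Fintype B] [Fintype C] (q : A × B × C → ℝ) : A → ℝ :=
  fun a => ∑ b, ∑ c, q (a, b, c)

/-- Marginal distribution of the second coordinate. -/
def mB {A B C : Type} [Fintype A] [Fintype C] (q : A × B × C → ℝ) : B → ℝ :=
  fun b => ∑ a, ∑ c, q (a, b, c)

/-- Marginal distribution of the third coordinate (the target). -/
def mC {A B C : Type} [Fintype A] [Fintype B] (q : A × B × C → ℝ) : C → ℝ :=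
  fun c => ∑ a, ∑ b, q (a, b, c)

/-- The distribution making `X₁` and `X₂` conditionally independent given `Y`,
`q(x₁,x₂,y) = p(x₁,y) p(x₂,y) / p(y)`: the maximum entropy distribution subject to the
pairwise source-target marginal constraints. -/
noncomputable def Qstar {A B C : Type} [Fintype A] [Fintype B]
    (p : A × B × C → ℝ) : A × B × C → ℝ :=
  fun x => mAC p (x.1, x.2.2) * mBC p (x.2.1, x.2.2) / mC p x.2.2

/-- Mutual information between the two sources `I(X₁;X₂)` under `q`. -/
noncomputable def miAB {A B C : Type} [Fintype A] [Fintype B] [Fintype C]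
    (q : A × B × C → ℝ) : ℝ :=
  entD (mA q) + entD (mB q) - entD (mAB q)

/-- Mutual information `I(X₁;Y)` under `q`. -/
noncomputable def miAC {A B C : Type} [Fintype A] [Fintype B] [Fintype C]
    (q : A × B × C → ℝ) : ℝ :=
  entD (mA q) + entD (mC q) - entD (mAC q)

/-- Mutual information `I(X₂;Y)` under `q`. -/
noncomputable def miBC {A B C : Type} [Fintype A] [Fintype B] [Fintype C]
    (q : A × B × C → ℝ) : ℝ :=
  entD (mB q) + entD (mC q) - entD (mBC q)

/-- Conditional mutual information `I(X₁;X₂|Y)` under `q`. -/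
noncomputable def cmiABgC {A B C : Type} [Fintype A] [Fintype B] [Fintype C]
    (q : A × B × C → ℝ) : ℝ :=
  entD (mAC q) + entD (mBC q) - entD (mC q) - entD q

/-- Conditional mutual information `I(X₁;Y|X₂)` under `q`. -/
noncomputable def cmiACgB {A B C : Type} [Fintype A] [Fintype B] [Fintype C]
    (q : A × B × C → ℝ) : ℝ :=
  entD (mAB q) + entD (mBC q) - entD (mB q) - entD q

/-- Coinformation `I(X₁;X₂;Y) = I(X₁;X₂) − I(X₁;X₂|Y)` under `q`. -/
noncomputable def coI {A B C : Type} [Fintype A] [Fintype B] [Fintype C]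
    (q : A × B × C → ℝ) : ℝ :=
  miAB q - cmiABgC q

section Aux

variable {A B C : Type} [Fintype A] [Fintype B] [Fintype C]

private lemma gibbs_le {a b : ℝ} (ha : 0 ≤ a) (hb : 0 < b) :
    a * Real.log b - a * Real.log a ≤ b - a := by
  rcases eq_or_lt_of_le ha with h | h
  · simp [← h]; linarith
  · have hlog := Real.log_le_sub_one_of_pos (div_pos hb h)
    rw [Real.log_div hb.ne' h.ne'] at hlog
    have h2 : a * (Real.log b - Real.log a) ≤ a * (b / a - 1) :=
      mul_le_mul_of_nonneg_left hlog h.le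
    have h3 : a * (b / a - 1) = b - a := by field_simp
    nlinarith [h2, h3]

private lemma gibbs_eq {a b : ℝ} (ha : 0 ≤ a) (hb : 0 < b)
    (h : a * Real.log b - a * Real.log a = b - a) : a = b := by
  rcases eq_or_lt_of_le ha with h0 | h0
  · exfalso
    rw [← h0] at h
    simp at h
    linarith
  · by_contra hne
    have hba : b / a ≠ 1 := by
      intro hh
      rw [div_eq_one_iff_eq h0.ne'] at hh
      exact hne hh.symm
    have hlog := Real.log_lt_sub_one_of_pos (div_pos hb h0) hba
    rw [Real.log_div hb.ne' h0.ne'] at hlog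
    have h2 : a * (Real.log b - Real.log a) < a * (b / a - 1) :=
      mul_lt_mul_of_pos_left hlog h0
    have h3 : a * (b / a - 1) = b - a := by field_simp
    nlinarith [h2, h3]

private lemma sum_prod3 (f : A × B × C → ℝ) :
    ∑ x, f x = ∑ a, ∑ b, ∑ c, f (a, b, c) := by
  rw [Fintype.sum_prod_type]
  exact Finset.sum_congr rfl fun a _ => by rw [Fintype.sum_prod_type]

private lemma sum_mul_fAC (q : A × B × C → ℝ) (f : A × C → ℝ) :
    ∑ x, q x * f (x.1, x.2.2) = ∑ a, ∑ c, mAC q (a, c) * f (a, c) := by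
  rw [sum_prod3]
  refine Finset.sum_congr rfl fun a _ => ?_
  rw [Finset.sum_comm]
  refine Finset.sum_congr rfl fun c _ => ?_
  simp only [mAC, Finset.sum_mul]

private lemma sum_mul_fBC (q : A × B × C → ℝ) (f : B × C → ℝ) :
    ∑ x, q x * f (x.2.1, x.2.2) = ∑ b, ∑ c, mBC q (b, c) * f (b, c) := by
  rw [sum_prod3, Finset.sum_comm]
  refine Finset.sum_congr rfl fun b _ => ?_
  rw [Finset.sum_comm]
  refine Finset.sum_congr rfl fun c _ => ?_
  simp only [mBC, Finset.sum_mul]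

private lemma sum_mul_fC (q : A × B × C → ℝ) (f : C → ℝ) :
    ∑ x, q x * f x.2.2 = ∑ c, mC q c * f c := by
  rw [sum_prod3]
  have : ∀ a : A, ∑ b, ∑ c, q (a, b, c) * f c = ∑ c, (∑ b, q (a, b, c)) * f c := by
    intro a
    rw [Finset.sum_comm]
    exact Finset.sum_congr rfl fun c _ => by rw [Finset.sum_mul]
  simp only [this]
  rw [Finset.sum_comm]
  refine Finset.sum_congr rfl fun c _ => ?_
  simp only [mC, Finset.sum_mul]

private lemma sum_eq_sum_mAC (q : A × B × C → ℝ) :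
    ∑ x, q x = ∑ a, ∑ c, mAC q (a, c) := by
  have := sum_mul_fAC q (fun _ => 1)
  simpa using this

private lemma mC_eq_sum_mBC (q : A × B × C → ℝ) (c : C) :
    mC q c = ∑ b, mBC q (b, c) := by
  simp only [mC, mBC]
  exact Finset.sum_comm

private lemma mC_eq_sum_mAC (q : A × B × C → ℝ) (c : C) :
    mC q c = ∑ a, mAC q (a, c) := by
  simp only [mC, mAC]

variable (p : A × B × C → ℝ)

private lemma mAC_pos (hpos : ∀ x, 0 < p x) (a : A) (c : C) [Nonempty B] :
    0 < mAC p (a, c) :=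
  Finset.sum_pos (fun b _ => hpos _) Finset.univ_nonempty

private lemma mBC_pos (hpos : ∀ x, 0 < p x) (b : B) (c : C) [Nonempty A] :
    0 < mBC p (b, c) :=
  Finset.sum_pos (fun a _ => hpos _) Finset.univ_nonempty

private lemma mC_pos (hpos : ∀ x, 0 < p x) (c : C) [Nonempty A] [Nonempty B] :
    0 < mC p c :=
  Finset.sum_pos (fun a _ => Finset.sum_pos (fun b _ => hpos _) Finset.univ_nonempty)
    Finset.univ_nonempty

private lemma mAC_Qstar (hpos : ∀ x, 0 < p x) [Nonempty A] [Nonempty B] :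
    mAC (Qstar p) = mAC p := by
  funext x
  obtain ⟨a, c⟩ := x
  have hc := (mC_pos p hpos c).ne'
  simp only [mAC, Qstar]
  rw [← Finset.sum_div, ← Finset.mul_sum, ← mC_eq_sum_mBC, mul_div_assoc,
    div_self hc, mul_one]

private lemma mBC_Qstar (hpos : ∀ x, 0 < p x) [Nonempty A] [Nonempty B] :
    mBC (Qstar p) = mBC p := by
  funext x
  obtain ⟨b, c⟩ := x
  have hc := (mC_pos p hpos c).ne'
  simp only [mBC, Qstar]
  rw [← Finset.sum_div, ← Finset.sum_mul, ← mC_eq_sum_mAC, mul_comm, mul_div_assoc,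
    div_self hc, mul_one]

private lemma qstar_pos (hpos : ∀ x, 0 < p x) [Nonempty A] [Nonempty B]
    (x : A × B × C) : 0 < Qstar p x :=
  div_pos (mul_pos (mAC_pos p hpos _ _) (mBC_pos p hpos _ _)) (mC_pos p hpos _)

private lemma log_Qstar (hpos : ∀ x, 0 < p x) [Nonempty A] [Nonempty B]
    (x : A × B × C) :
    Real.log (Qstar p x) = Real.log (mAC p (x.1, x.2.2)) +
      Real.log (mBC p (x.2.1, x.2.2)) - Real.log (mC p x.2.2) := by
  rw [Qstar,
    Real.log_div (mul_pos (mAC_pos p hpos _ _) (mBC_pos p hpos _ _)).ne'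
      (mC_pos p hpos _).ne',
    Real.log_mul (mAC_pos p hpos _ _).ne' (mBC_pos p hpos _ _).ne']

private lemma sum_mul_logQ (hpos : ∀ x, 0 < p x) [Nonempty A] [Nonempty B]
    (q : A × B × C → ℝ) (hAC : mAC q = mAC p) (hBC : mBC q = mBC p) :
    ∑ x, q x * Real.log (Qstar p x) =
      (∑ a, ∑ c, mAC p (a, c) * Real.log (mAC p (a, c))) +
      (∑ b, ∑ c, mBC p (b, c) * Real.log (mBC p (b, c))) -
      ∑ c, mC p c * Real.log (mC p c) := by
  have hC : mC q = mC p := by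
    funext c
    rw [mC_eq_sum_mBC, mC_eq_sum_mBC, hBC]
  calc ∑ x, q x * Real.log (Qstar p x)
      = ∑ x, (q x * Real.log (mAC p (x.1, x.2.2)) +
          q x * Real.log (mBC p (x.2.1, x.2.2)) - q x * Real.log (mC p x.2.2)) := by
        refine Finset.sum_congr rfl fun x _ => ?_
        rw [log_Qstar p hpos x]; ring
    _ = (∑ x, q x * Real.log (mAC p (x.1, x.2.2))) +
        (∑ x, q x * Real.log (mBC p (x.2.1, x.2.2))) -
        ∑ x, q x * Real.log (mC p x.2.2) := by
        rw [Finset.sum_sub_distrib, Finset.sum_add_distrib]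
    _ = _ := by
        rw [sum_mul_fAC q (fun y => Real.log (mAC p y)),
          sum_mul_fBC q (fun y => Real.log (mBC p y)),
          sum_mul_fC q (fun y => Real.log (mC p y)), hAC, hBC, hC]

private lemma entD_eq_neg_sum {α : Type} [Fintype α] (q : α → ℝ) :
    entD q = -∑ x, q x * Real.log (q x) := by
  rw [entD, Finset.sum_neg_distrib]

end Aux

/-- The maximum entropy joint distribution over finite alphabets,
subject to matching both pairwise source-target marginals of a given full-support
distribution `p`, is `q(x₁,x₂,y) = p(x₁,y) p(x₂,y) / p(y)`: it satisfies the constraints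
and uniquely maximizes the Shannon entropy among all distributions satisfying them. -/
theorem maxent_with_pairwise_constraints_is_conditional_independence
    {A B C : Type} [Fintype A] [Fintype B] [Fintype C]
    (p : A × B × C → ℝ) (hpos : ∀ x, 0 < p x) (hsum : ∑ x, p x = 1) :
    -- `Qstar p` satisfies the marginal constraints and is a probability distribution
    ((∀ x, 0 ≤ Qstar p x) ∧ (∑ x, Qstar p x = 1) ∧
      mAC (Qstar p) = mAC p ∧ mBC (Qstar p) = mBC p) ∧
    -- and it is the unique entropy maximizer among distributions with those marginals
    (∀ q : A × B × C → ℝ, (∀ x, 0 ≤ q x) → (∑ x, q x = 1) →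
      mAC q = mAC p → mBC q = mBC p →
      entD q ≤ entD (Qstar p) ∧ (entD q = entD (Qstar p) → q = Qstar p)) := by
  have hne : Nonempty (A × B × C) := by
    by_contra h
    rw [not_nonempty_iff] at h
    rw [Finset.univ_eq_empty, Finset.sum_empty] at hsum
    norm_num at hsum
  have : Nonempty A := ⟨hne.some.1⟩
  have : Nonempty B := ⟨hne.some.2.1⟩
  have : Nonempty C := ⟨hne.some.2.2⟩
  have hQpos : ∀ x, 0 < Qstar p x := qstar_pos p hpos
  have hQAC : mAC (Qstar p) = mAC p := mAC_Qstar p hpos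
  have hQBC : mBC (Qstar p) = mBC p := mBC_Qstar p hpos
  have hQsum : ∑ x, Qstar p x = 1 := by
    rw [sum_eq_sum_mAC, ← hsum, sum_eq_sum_mAC p]
    simp only [hQAC]
  -- key: for any feasible q, ∑ q log Qstar = ∑ Qstar log Qstar
  have key : ∀ q : A × B × C → ℝ, mAC q = mAC p → mBC q = mBC p →
      ∑ x, q x * Real.log (Qstar p x) = ∑ x, Qstar p x * Real.log (Qstar p x) := by
    intro q hAC hBC
    rw [sum_mul_logQ p hpos q hAC hBC, sum_mul_logQ p hpos (Qstar p) hQAC hQBC]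
  refine ⟨⟨fun x => (hQpos x).le, hQsum, hQAC, hQBC⟩, ?_⟩
  intro q hq0 hq1 hAC hBC
  have hkey := key q hAC hBC
  -- pointwise Gibbs bound
  have hterm : ∀ x : A × B × C, x ∈ Finset.univ →
      q x * Real.log (Qstar p x) - q x * Real.log (q x) ≤ Qstar p x - q x :=
    fun x _ => gibbs_le (hq0 x) (hQpos x)
  have hsum_rhs : ∑ x, (Qstar p x - q x) = 0 := by
    rw [Finset.sum_sub_distrib, hQsum, hq1, sub_self]
  have hdiff : entD (Qstar p) - entD q =
      -∑ x, (q x * Real.log (Qstar p x) - q x * Real.log (q x)) := by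
    rw [entD_eq_neg_sum, entD_eq_neg_sum, ← hkey, Finset.sum_sub_distrib]
    ring
  have hle : ∑ x, (q x * Real.log (Qstar p x) - q x * Real.log (q x)) ≤ 0 := by
    calc ∑ x, (q x * Real.log (Qstar p x) - q x * Real.log (q x))
        ≤ ∑ x, (Qstar p x - q x) := Finset.sum_le_sum hterm
      _ = 0 := hsum_rhs
  constructor
  · linarith
  · intro heq
    have hzero : ∑ x, (q x * Real.log (Qstar p x) - q x * Real.log (q x)) =
        ∑ x, (Qstar p x - q x) := by
      rw [hsum_rhs]; linarith
    have hall := (Finset.sum_eq_sum_iff_of_le hterm).mp hzero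
    funext x
    exact gibbs_eq (hq0 x) (hQpos x) (hall x (Finset.mem_univ x))
end

section
/- Let Q be the maximum entropy distribution q(x_1, x_2, y) = p(x_1, y) p(x_2, y) / p(y). Then the conditional mutual information I_Q(X_1; Y | X_2) equals zero if and only if X_1 and Y are independent under p. -/
section AuxGibbs

lemma ptGibbs_le {q r : ℝ} (hq : 0 < q) (hr : 0 < r) : q - r ≤ q * Real.log (q / r) := by
  have h := Real.log_le_sub_one_of_pos (div_pos hr hq)
  have hlog : Real.log (q / r) = - Real.log (r / q) := by
    rw [← Real.log_inv, inv_div]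
  have h2 := mul_le_mul_of_nonneg_left h hq.le
  have h3 : q * (r / q - 1) = r - q := by field_simp
  rw [hlog]; nlinarith

lemma ptGibbs_lt {q r : ℝ} (hq : 0 < q) (hr : 0 < r) (hne : q ≠ r) :
    q - r < q * Real.log (q / r) := by
  have hx : r / q ≠ 1 := by
    intro h; apply hne; field_simp at h; linarith
  have h := Real.log_lt_sub_one_of_pos (div_pos hr hq) hx
  have hlog : Real.log (q / r) = - Real.log (r / q) := by
    rw [← Real.log_inv, inv_div]
  have h2 := mul_lt_mul_of_pos_left h hq
  have h3 : q * (r / q - 1) = r - q := by field_simp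
  rw [hlog]; nlinarith

lemma klGibbs_eq_zero_iff {ι : Type} [Fintype ι] (q r : ι → ℝ) (hq : ∀ i, 0 < q i)
    (hr : ∀ i, 0 < r i) (hsum : ∑ i, r i = ∑ i, q i) :
    (∑ i, q i * Real.log (q i / r i)) = 0 ↔ ∀ i, q i = r i := by
  constructor
  · intro h i
    by_contra hne
    have hlt : ∑ j, (q j - r j) < ∑ j, q j * Real.log (q j / r j) := by
      apply Finset.sum_lt_sum (fun j _ => ptGibbs_le (hq j) (hr j))
      exact ⟨i, Finset.mem_univ i, ptGibbs_lt (hq i) (hr i) hne⟩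
    rw [Finset.sum_sub_distrib, hsum, sub_self, h] at hlt
    exact lt_irrefl _ hlt
  · intro h
    apply Finset.sum_eq_zero
    intro i _
    rw [h i, div_self (hr i).ne', Real.log_one, mul_zero]

variable {A B C : Type} [Fintype A] [Fintype B] [Fintype C]

lemma sum3_prod (f : A → B → C → ℝ) :
    ∑ x : A × B × C, f x.1 x.2.1 x.2.2 = ∑ a, ∑ b, ∑ c, f a b c := by
  rw [Fintype.sum_prod_type]
  exact Finset.sum_congr rfl fun a _ => Fintype.sum_prod_type _

lemma sum3_bca (f : A → B → C → ℝ) :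
    ∑ b, ∑ c, ∑ a, f a b c = ∑ a, ∑ b, ∑ c, f a b c :=
  calc ∑ b, ∑ c, ∑ a, f a b c
      = ∑ b, ∑ a, ∑ c, f a b c := Finset.sum_congr rfl fun _ _ => Finset.sum_comm
    _ = ∑ a, ∑ b, ∑ c, f a b c := Finset.sum_comm

lemma sum3_bac (f : A → B → C → ℝ) :
    ∑ b, ∑ a, ∑ c, f a b c = ∑ a, ∑ b, ∑ c, f a b c :=
  Finset.sum_comm

lemma sum3_cab (f : A → B → C → ℝ) :
    ∑ c, ∑ a, ∑ b, f a b c = ∑ a, ∑ b, ∑ c, f a b c :=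
  calc ∑ c, ∑ a, ∑ b, f a b c
      = ∑ a, ∑ c, ∑ b, f a b c := Finset.sum_comm
    _ = ∑ a, ∑ b, ∑ c, f a b c := Finset.sum_congr rfl fun _ _ => Finset.sum_comm

lemma sum_comb1 {ι : Type} [Fintype ι] (f g h k : ι → ℝ) :
    (∑ i, f i) + (∑ i, g i) - (∑ i, h i) - (∑ i, k i)
      = ∑ i, (f i + g i - h i - k i) := by
  rw [← Finset.sum_add_distrib, ← Finset.sum_sub_distrib, ← Finset.sum_sub_distrib]

lemma sum3_comb (f g h k : A → B → C → ℝ) :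
    (∑ a, ∑ b, ∑ c, f a b c) + (∑ a, ∑ b, ∑ c, g a b c)
      - (∑ a, ∑ b, ∑ c, h a b c) - (∑ a, ∑ b, ∑ c, k a b c)
    = ∑ a, ∑ b, ∑ c, (f a b c + g a b c - h a b c - k a b c) := by
  rw [sum_comb1]
  refine Finset.sum_congr rfl fun a _ => ?_
  rw [sum_comb1]
  refine Finset.sum_congr rfl fun b _ => ?_
  rw [sum_comb1]

lemma sum_mAB_eq_mB (q : A × B × C → ℝ) (b : B) : ∑ a, mAB q (a, b) = mB q b := rfl

lemma sum_mBC_eq_mB (q : A × B × C → ℝ) (b : B) : ∑ c, mBC q (b, c) = mB q b :=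
  Finset.sum_comm

lemma sum_mAC_fst (q : A × B × C → ℝ) (c : C) : ∑ a, mAC q (a, c) = mC q c := rfl

lemma sum_mAC_snd (q : A × B × C → ℝ) (a : A) : ∑ c, mAC q (a, c) = mA q a :=
  Finset.sum_comm

lemma sum_mBC_fst (q : A × B × C → ℝ) (c : C) : ∑ b, mBC q (b, c) = mC q c :=
  Finset.sum_comm

lemma sum_total (q : A × B × C → ℝ) : ∑ x, q x = ∑ b, mB q b := by
  calc ∑ x, q x = ∑ a, ∑ b, ∑ c, q (a, b, c) := sum3_prod (fun a b c => q (a, b, c))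
  _ = ∑ b, ∑ a, ∑ c, q (a, b, c) := (sum3_bac _).symm
  _ = ∑ b, mB q b := rfl

lemma cmi_as_kl (q : A × B × C → ℝ) (hq : ∀ x, 0 < q x)
    (hAB : ∀ a b, 0 < mAB q (a, b)) (hBC : ∀ b c, 0 < mBC q (b, c))
    (hB : ∀ b, 0 < mB q b) :
    cmiACgB q = ∑ x : A × B × C,
      q x * Real.log (q x / (mAB q (x.1, x.2.1) * mBC q (x.2.1, x.2.2) / mB q x.2.1)) := by
  have e1 : entD (mAB q) = ∑ a, ∑ b, ∑ c, -(q (a, b, c) * Real.log (mAB q (a, b))) := by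
    have e0 : entD (mAB q) = ∑ ab : A × B, -(mAB q ab * Real.log (mAB q ab)) := rfl
    rw [e0, Fintype.sum_prod_type]
    refine Finset.sum_congr rfl fun a _ => Finset.sum_congr rfl fun b _ => ?_
    rw [show mAB q (a, b) * Real.log (mAB q (a, b))
        = (∑ c, q (a, b, c)) * Real.log (mAB q (a, b)) from rfl,
      Finset.sum_mul, Finset.sum_neg_distrib]
  have e2 : entD (mBC q) = ∑ a, ∑ b, ∑ c, -(q (a, b, c) * Real.log (mBC q (b, c))) := by
    rw [← sum3_bca]
    have e0 : entD (mBC q) = ∑ bc : B × C, -(mBC q bc * Real.log (mBC q bc)) := rfl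
    rw [e0, Fintype.sum_prod_type]
    refine Finset.sum_congr rfl fun b _ => Finset.sum_congr rfl fun c _ => ?_
    rw [show mBC q (b, c) * Real.log (mBC q (b, c))
        = (∑ a, q (a, b, c)) * Real.log (mBC q (b, c)) from rfl,
      Finset.sum_mul, Finset.sum_neg_distrib]
  have e3 : entD (mB q) = ∑ a, ∑ b, ∑ c, -(q (a, b, c) * Real.log (mB q b)) := by
    rw [← sum3_bac]
    have e0 : entD (mB q) = ∑ b, -(mB q b * Real.log (mB q b)) := rfl
    rw [e0]
    refine Finset.sum_congr rfl fun b _ => ?_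
    rw [show mB q b * Real.log (mB q b)
        = (∑ a, ∑ c, q (a, b, c)) * Real.log (mB q b) from rfl]
    simp only [Finset.sum_mul, Finset.sum_neg_distrib]
  have e4 : entD q = ∑ a, ∑ b, ∑ c, -(q (a, b, c) * Real.log (q (a, b, c))) := by
    exact sum3_prod (fun a b c => -(q (a, b, c) * Real.log (q (a, b, c))))
  have rhs : ∑ x : A × B × C,
      q x * Real.log (q x / (mAB q (x.1, x.2.1) * mBC q (x.2.1, x.2.2) / mB q x.2.1))
      = ∑ a, ∑ b, ∑ c, q (a, b, c) * Real.log
          (q (a, b, c) / (mAB q (a, b) * mBC q (b, c) / mB q b)) :=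
    sum3_prod (fun a b c => q (a, b, c) * Real.log
      (q (a, b, c) / (mAB q (a, b) * mBC q (b, c) / mB q b)))
  rw [cmiACgB, e1, e2, e3, e4, rhs, sum3_comb]
  refine Finset.sum_congr rfl fun a _ => Finset.sum_congr rfl fun b _ =>
    Finset.sum_congr rfl fun c _ => ?_
  rw [Real.log_div (hq (a, b, c)).ne'
      (div_pos (mul_pos (hAB a b) (hBC b c)) (hB b)).ne',
    Real.log_div (mul_pos (hAB a b) (hBC b c)).ne' (hB b).ne',
    Real.log_mul (hAB a b).ne' (hBC b c).ne']
  ring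

end AuxGibbs

/-- Let `Q` be the maximum entropy distribution
`q(x₁,x₂,y) = p(x₁,y)p(x₂,y)/p(y)`. Then the conditional mutual information
`I_Q(X₁;Y|X₂)` equals zero if and only if `X₁` and `Y` are independent under `p`. -/
theorem cmi_under_Qstar_eq_zero_iff_independent
    {A B C : Type} [Fintype A] [Fintype B] [Fintype C]
    (p : A × B × C → ℝ) (hpos : ∀ x, 0 < p x) (hsum : ∑ x, p x = 1) :
    cmiACgB (Qstar p) = 0 ↔ ∀ (a : A) (c : C), mAC p (a, c) = mA p a * mC p c := by
  -- setup
  have hne : Nonempty (A × B × C) := by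
    by_contra h
    rw [not_nonempty_iff] at h
    rw [Finset.univ_eq_empty, Finset.sum_empty] at hsum
    exact one_ne_zero hsum.symm
  obtain ⟨a0, b0, c0⟩ := hne
  have hACpos : ∀ a c, 0 < mAC p (a, c) :=
    fun a c => Finset.sum_pos (fun b _ => hpos _) ⟨b0, Finset.mem_univ _⟩
  have hBCpos : ∀ b c, 0 < mBC p (b, c) :=
    fun b c => Finset.sum_pos (fun a _ => hpos _) ⟨a0, Finset.mem_univ _⟩
  have hCpos : ∀ c, 0 < mC p c :=
    fun c => Finset.sum_pos (fun a _ =>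
      Finset.sum_pos (fun b _ => hpos _) ⟨b0, Finset.mem_univ _⟩) ⟨a0, Finset.mem_univ _⟩
  have hBpos : ∀ b, 0 < mB p b :=
    fun b => Finset.sum_pos (fun a _ =>
      Finset.sum_pos (fun c _ => hpos _) ⟨c0, Finset.mem_univ _⟩) ⟨a0, Finset.mem_univ _⟩
  have hQpos : ∀ x, 0 < Qstar p x :=
    fun x => div_pos (mul_pos (hACpos _ _) (hBCpos _ _)) (hCpos _)
  have hsum3 : ∑ a, ∑ b, ∑ c, p (a, b, c) = 1 := by
    rw [← hsum]; exact (sum3_prod (fun a b c => p (a, b, c))).symm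
  have hsumB : ∑ b, mB p b = 1 := by
    rw [← hsum3]; exact sum3_bac (fun a b c => p (a, b, c))
  have hsumC : ∑ c, mC p c = 1 := by
    rw [← hsum3]; exact sum3_cab (fun a b c => p (a, b, c))
  -- marginals of Qstar
  have hQeq : ∀ a b c, Qstar p (a, b, c) = mAC p (a, c) * mBC p (b, c) / mC p c :=
    fun _ _ _ => rfl
  have hmBCQ : ∀ b c, mBC (Qstar p) (b, c) = mBC p (b, c) := by
    intro b c
    have : mBC (Qstar p) (b, c) = (∑ a, mAC p (a, c)) * mBC p (b, c) / mC p c := by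
      show ∑ a, Qstar p (a, b, c) = _
      rw [Finset.sum_mul, Finset.sum_div]
      exact Finset.sum_congr rfl fun a _ => rfl
    rw [this, sum_mAC_fst, mul_comm, mul_div_assoc, div_self (hCpos c).ne', mul_one]
  have hmBQ : ∀ b, mB (Qstar p) b = mB p b := by
    intro b
    have h1 : mB (Qstar p) b = ∑ c, mBC (Qstar p) (b, c) := (sum_mBC_eq_mB _ b).symm
    rw [h1]
    simp only [hmBCQ]
    exact sum_mBC_eq_mB p b
  have hABQpos : ∀ a b, 0 < mAB (Qstar p) (a, b) :=
    fun a b => Finset.sum_pos (fun c _ => hQpos _) ⟨c0, Finset.mem_univ _⟩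
  have hBCQpos : ∀ b c, 0 < mBC (Qstar p) (b, c) := fun b c => by
    rw [hmBCQ]; exact hBCpos b c
  have hBQpos : ∀ b, 0 < mB (Qstar p) b := fun b => by rw [hmBQ]; exact hBpos b
  have hrpos : ∀ x : A × B × C,
      0 < mAB (Qstar p) (x.1, x.2.1) * mBC (Qstar p) (x.2.1, x.2.2) / mB (Qstar p) x.2.1 :=
    fun x => div_pos (mul_pos (hABQpos _ _) (hBCQpos _ _)) (hBQpos _)
  have hQsum : ∑ x, Qstar p x = 1 := by
    rw [sum_total]; simp only [hmBQ]; exact hsumB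
  have hrsum : ∑ x : A × B × C,
      mAB (Qstar p) (x.1, x.2.1) * mBC (Qstar p) (x.2.1, x.2.2) / mB (Qstar p) x.2.1
      = ∑ x, Qstar p x := by
    rw [hQsum]
    calc ∑ x : A × B × C,
        mAB (Qstar p) (x.1, x.2.1) * mBC (Qstar p) (x.2.1, x.2.2) / mB (Qstar p) x.2.1
        = ∑ a, ∑ b, ∑ c, mAB (Qstar p) (a, b) * mBC (Qstar p) (b, c) / mB (Qstar p) b :=
          sum3_prod (fun a b c => mAB (Qstar p) (a, b) * mBC (Qstar p) (b, c) / mB (Qstar p) b)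
      _ = ∑ b, ∑ a, ∑ c, mAB (Qstar p) (a, b) * mBC (Qstar p) (b, c) / mB (Qstar p) b :=
          (sum3_bac _).symm
      _ = ∑ b, mB (Qstar p) b := by
          refine Finset.sum_congr rfl fun b _ => ?_
          have h1 : ∀ a, ∑ c, mAB (Qstar p) (a, b) * mBC (Qstar p) (b, c) / mB (Qstar p) b
              = mAB (Qstar p) (a, b) * mB (Qstar p) b / mB (Qstar p) b := by
            intro a
            rw [← Finset.sum_div, ← Finset.mul_sum, sum_mBC_eq_mB]
          calc ∑ a, ∑ c, mAB (Qstar p) (a, b) * mBC (Qstar p) (b, c) / mB (Qstar p) b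
              = ∑ a, mAB (Qstar p) (a, b) * mB (Qstar p) b / mB (Qstar p) b :=
                Finset.sum_congr rfl fun a _ => h1 a
            _ = ∑ a, mAB (Qstar p) (a, b) := by
                refine Finset.sum_congr rfl fun a _ => ?_
                rw [mul_div_assoc, div_self (hBQpos b).ne', mul_one]
            _ = mB (Qstar p) b := sum_mAB_eq_mB (Qstar p) b
      _ = ∑ b, mB p b := by simp only [hmBQ]
      _ = 1 := hsumB
  rw [cmi_as_kl (Qstar p) hQpos hABQpos hBCQpos hBQpos,
    klGibbs_eq_zero_iff (Qstar p) _ hQpos hrpos hrsum]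
  constructor
  · intro h a c
    have keyf : ∀ c, mAC p (a, c) * mB p b0 = mAB (Qstar p) (a, b0) * mC p c := by
      intro c
      have h1 : mAC p (a, c) * mBC p (b0, c) / mC p c
          = mAB (Qstar p) (a, b0) * mBC p (b0, c) / mB p b0 := by
        have h2 := h (a, b0, c)
        rwa [hmBCQ, hmBQ] at h2
      field_simp [(hCpos c).ne', (hBpos b0).ne'] at h1
      exact mul_right_cancel₀ (hBCpos b0 c).ne' (by linear_combination h1)
    have hmAa : mA p a * mB p b0 = mAB (Qstar p) (a, b0) := by
      have h1 : (∑ c, mAC p (a, c)) * mB p b0 = mAB (Qstar p) (a, b0) * ∑ c, mC p c := by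
        rw [Finset.sum_mul, Finset.mul_sum]
        exact Finset.sum_congr rfl fun c _ => keyf c
      rwa [sum_mAC_snd, hsumC, mul_one] at h1
    have h2 := keyf c
    rw [← hmAa] at h2
    exact mul_right_cancel₀ (hBpos b0).ne' (by linear_combination h2)
  · intro h x
    obtain ⟨a, b, c⟩ := x
    have hQ2 : ∀ a b c, Qstar p (a, b, c) = mA p a * mBC p (b, c) := by
      intro a b c
      rw [hQeq, h a c, div_eq_iff (hCpos c).ne']
      ring
    have hABQ : mAB (Qstar p) (a, b) = mA p a * mB p b := by
      show ∑ c, Qstar p (a, b, c) = _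
      simp only [hQ2]
      rw [← Finset.mul_sum, sum_mBC_eq_mB]
    show Qstar p (a, b, c)
        = mAB (Qstar p) (a, b) * mBC (Qstar p) (b, c) / mB (Qstar p) b
    rw [hABQ, hmBCQ, hmBQ, hQ2, eq_div_iff (hBpos b).ne']
    ring
end
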